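/- Let F be a strictly 1-balanced graph on r ≥ 3 vertices, let C be a sparse clean F-cycle, and let G be the clean d-cycle consisting of the shadow graph of C (which has v(G) = 2(r−1) vertices and 2e(F)−1 usual edges) together with the single dummy edge C, so that e(G) = 2e(F) and e(G)/v(G) = d_1(F). Then every proper sub-d-graph S of G with at least one edge satisfies e(S)/v(S) < e(G)/v(G); that is, G is strictly balanced. -/

import Mathlib

open scoped Classical
open Filter Asymptotics

noncomputable section

/-! ### Basic graph quantities -/

/-- The number of edges of a simple graph. -/
def edgeCnt {V : Type*} (G : SimpleGraph V) : ℕ := G.edgeSet.ncard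

/-- The 1-density `e(F)/(v(F)-1)` of a graph `F` on `r` vertices. -/
def d1 {r : ℕ} (F : SimpleGraph (Fin r)) : ℝ := (edgeCnt F : ℝ) / ((r : ℝ) - 1)

/-- `F` is strictly 1-balanced: every proper subgraph `S` with at least 2 vertices and at
least one edge satisfies `d₁(S) < d₁(F)`. -/
def Strictly1Balanced {r : ℕ} (F : SimpleGraph (Fin r)) : Prop :=
  ∀ S : F.Subgraph, S ≠ ⊤ → 2 ≤ S.verts.ncard → 1 ≤ S.edgeSet.ncard →
    (S.edgeSet.ncard : ℝ) / ((S.verts.ncard : ℝ) - 1) < d1 F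

/-- The number of automorphisms of `F`. -/
def autCard {r : ℕ} (F : SimpleGraph (Fin r)) : ℕ := Nat.card (F ≃g F)

/-! ### Copies of `F` in a graph, `F`-factors, `F`-isolated vertices -/

/-- `φ` is a copy of `F` in `G` (an embedding of `F` as a not necessarily induced subgraph). -/
def IsCopyIn {r n : ℕ} (F : SimpleGraph (Fin r)) (G : SimpleGraph (Fin n))
    (φ : Fin r ↪ Fin n) : Prop :=
  ∀ u v, F.Adj u v → G.Adj (φ u) (φ v)

/-- `G` contains an `F`-factor: pairwise vertex-disjoint copies of `F` covering all vertices. -/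
def HasFFactor {r n : ℕ} (F : SimpleGraph (Fin r)) (G : SimpleGraph (Fin n)) : Prop :=
  ∃ Φ : Finset (Fin r ↪ Fin n),
    (∀ φ ∈ Φ, IsCopyIn F G φ) ∧
    (∀ φ ∈ Φ, ∀ ψ ∈ Φ, φ ≠ ψ → ∀ x : Fin n, ¬(x ∈ Set.range φ ∧ x ∈ Set.range ψ)) ∧
    (∀ x : Fin n, ∃ φ ∈ Φ, x ∈ Set.range φ)

/-- Vertex `x` is `F`-isolated in `G`: no copy of `F` in `G` contains `x`. -/
def FIsolated {r n : ℕ} (F : SimpleGraph (Fin r)) (G : SimpleGraph (Fin n)) (x : Fin n) : Prop :=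
  ∀ φ : Fin r ↪ Fin n, IsCopyIn F G φ → x ∉ Set.range φ

/-! ### The random graph `G(n,p)` -/

/-- Probability of the event `P` in the Erdős–Rényi random graph `G(n,p)`. -/
def gnpProb (n : ℕ) (p : ℝ) (P : SimpleGraph (Fin n) → Prop) : ℝ :=
  ∑ G : SimpleGraph (Fin n),
    if P G then p ^ edgeCnt G * (1 - p) ^ (n.choose 2 - edgeCnt G) else 0

/-- The sharp threshold `p* = ((aut F / r!) · ln n / C(n-1, r-1))^(1/e(F))`. -/
def pstar {r : ℕ} (F : SimpleGraph (Fin r)) (n : ℕ) : ℝ :=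
  ((autCard F : ℝ) / (r.factorial : ℝ) * Real.log n / ((n - 1).choose (r - 1) : ℝ)) ^
    ((1 : ℝ) / (edgeCnt F : ℝ))

/-! ### `F`-edges and `F`-graphs -/

/-- An `F`-edge: a pair (vertex set, edge set); the copies of `F` among these are singled out
by `FEdge.IsCopyOf`. -/
abbrev FEdge (V : Type*) := Finset V × Finset (Sym2 V)

/-- `h` is a copy of `F` with vertices in `V`. -/
def FEdge.IsCopyOf {r : ℕ} {V : Type*} (h : FEdge V) (F : SimpleGraph (Fin r)) : Prop :=
  ∃ φ : Fin r → V, Function.Injective φ ∧ (↑h.1 : Set V) = Set.range φ ∧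
    (↑h.2 : Set (Sym2 V)) = Sym2.map φ '' F.edgeSet

/-- An `F`-graph: a vertex set together with a set of `F`-edges. -/
abbrev FGraph (V : Type*) := Finset V × Finset (FEdge V)

/-- Well-formedness of an `F`-graph w.r.t. `F`: every `F`-edge is a copy of `F` with
vertices inside the vertex set. -/
def FGraph.Wf {r : ℕ} {V : Type*} (H : FGraph V) (F : SimpleGraph (Fin r)) : Prop :=
  ∀ h ∈ H.2, FEdge.IsCopyOf h F ∧ h.1 ⊆ H.1

/-- The edge set of the shadow graph of an `F`-graph. -/
def shadowEdges {V : Type*} [DecidableEq V] (H : FGraph V) : Finset (Sym2 V) :=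
  H.2.sup Prod.snd

/-- The shadow graph of an `F`-graph. -/
def shadow {V : Type*} [DecidableEq V] (H : FGraph V) : SimpleGraph V :=
  SimpleGraph.fromEdgeSet ↑(shadowEdges H)

/-- Number of connected components of the shadow graph of `H` (on the vertex set of `H`). -/
def compCount {V : Type*} [DecidableEq V] (H : FGraph V) : ℕ :=
  Nat.card ((shadow H).induce (↑H.1 : Set V)).ConnectedComponent

/-- An `F`-graph is connected if its shadow graph is. -/
def FGraphConnected {V : Type*} [DecidableEq V] (H : FGraph V) : Prop :=
  ((shadow H).induce (↑H.1 : Set V)).Connected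

/-- The nullity `n(H) = (r-1)e(H) + c(H) - v(H)` of an `F`-graph. -/
def nullity (r : ℕ) {V : Type*} [DecidableEq V] (H : FGraph V) : ℤ :=
  ((r : ℤ) - 1) * H.2.card + compCount H - H.1.card

/-- An avoidable configuration: a connected `F`-graph of nullity at least 2. -/
def Avoidable {r : ℕ} {V : Type*} [DecidableEq V] (F : SimpleGraph (Fin r))
    (H : FGraph V) : Prop :=
  FGraph.Wf H F ∧ FGraphConnected H ∧ 2 ≤ nullity r H

/-- The `F`-edge `h` is induced by the `F`-graph `H`: it is a copy of `F`, not an `F`-edge of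
`H`, but all its edges lie in the shadow graph of `H`. -/
def InducedBy {r : ℕ} {V : Type*} [DecidableEq V] (F : SimpleGraph (Fin r)) (h : FEdge V)
    (H : FGraph V) : Prop :=
  FEdge.IsCopyOf h F ∧ h ∉ H.2 ∧ h.2 ⊆ shadowEdges H

/-- `C` is a clean `F`-cycle of length `k`. -/
def IsCleanCycleOfLen {r : ℕ} {V : Type*} [DecidableEq V] (F : SimpleGraph (Fin r))
    (C : FGraph V) (k : ℕ) : Prop :=
  FGraph.Wf C F ∧ C.1 = C.2.sup Prod.fst ∧
  ((k = 2 ∧ ∃ h₁ h₂ : FEdge V, h₁ ≠ h₂ ∧ C.2 = {h₁, h₂} ∧ (h₁.1 ∩ h₂.1).card = 2) ∨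
   (3 ≤ k ∧ ∃ h : Fin k → FEdge V, Function.Injective h ∧ C.2 = Finset.image h Finset.univ ∧
     ∃ v : Fin k → V, Function.Injective v ∧
       (∀ i j : Fin k, ((i : ℕ) + 1) % k = (j : ℕ) → (h i).1 ∩ (h j).1 = {v i}) ∧
       (∀ i j : Fin k, i ≠ j → ((i : ℕ) + 1) % k ≠ (j : ℕ) → ((j : ℕ) + 1) % k ≠ (i : ℕ) →
         (h i).1 ∩ (h j).1 = ∅)))

/-- `C` is a clean `F`-cycle (of some length `k ≥ 2`). -/
def IsCleanCycle {r : ℕ} {V : Type*} [DecidableEq V] (F : SimpleGraph (Fin r))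
    (C : FGraph V) : Prop :=
  ∃ k, IsCleanCycleOfLen F C k

/-- `C` is a sparse clean `F`-cycle: a clean `F`-cycle of length 2 whose two overlap vertices
form an edge of both of its `F`-edges. -/
def IsSparse {r : ℕ} {V : Type*} [DecidableEq V] (F : SimpleGraph (Fin r))
    (C : FGraph V) : Prop :=
  IsCleanCycleOfLen F C 2 ∧ ∃ h₁ h₂ : FEdge V, h₁ ≠ h₂ ∧ C.2 = {h₁, h₂} ∧
    ∃ x y : V, x ≠ y ∧ h₁.1 ∩ h₂.1 = {x, y} ∧ s(x, y) ∈ h₁.2 ∧ s(x, y) ∈ h₂.2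

/-! ### The random `F`-graph `H_F(n,π)` -/

/-- All potential `F`-edges on the vertex set `Fin n`. -/
def allFEdges (r n : ℕ) (F : SimpleGraph (Fin r)) : Finset (FEdge (Fin n)) :=
  Finset.univ.filter fun h => FEdge.IsCopyOf h F

/-- Expectation of `X` under the random `F`-graph `H_F(n,π)`, whose `F`-edge set is a random
subset of `allFEdges r n F`, each `F`-edge present independently with probability `π`. -/
def hfExp (r n : ℕ) (F : SimpleGraph (Fin r)) (π : ℝ)
    (X : Finset (FEdge (Fin n)) → ℝ) : ℝ :=
  ∑ S ∈ (allFEdges r n F).powerset,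
    π ^ S.card * (1 - π) ^ ((allFEdges r n F).card - S.card) * X S

/-- Probability of `P` under the random `F`-graph `H_F(n,π)`. -/
def hfProb (r n : ℕ) (F : SimpleGraph (Fin r)) (π : ℝ)
    (P : Finset (FEdge (Fin n)) → Prop) : ℝ :=
  hfExp r n F π fun S => if P S then 1 else 0

/-! ### Maps, isomorphisms and copies of `F`-graphs -/

/-- Image of an `F`-edge under a vertex map. -/
def FEdge.map {V W : Type*} [DecidableEq W] (ψ : V → W) (h : FEdge V) : FEdge W :=
  (h.1.image ψ, h.2.image (Sym2.map ψ))

/-- Image of an `F`-graph under a vertex map. -/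
def FGraph.map {V W : Type*} [DecidableEq V] [DecidableEq W] (ψ : V → W)
    (H : FGraph V) : FGraph W :=
  (H.1.image ψ, H.2.image (FEdge.map ψ))

/-- `H` is isomorphic to `K` via a vertex bijection mapping `F`-edges to `F`-edges. -/
def FGraph.IsoTo {V W : Type*} [DecidableEq V] [DecidableEq W] (H : FGraph V)
    (K : FGraph W) : Prop :=
  ∃ ψ : V → W, Set.InjOn ψ ↑H.1 ∧ FGraph.map ψ H = K

/-- The number of copies of the `F`-graph `H` among a set `S` of `F`-edges on `Fin n`. -/
def copyCount {V : Type*} [DecidableEq V] (H : FGraph V) {n : ℕ}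
    (S : Finset (FEdge (Fin n))) : ℕ :=
  Nat.card {K : FGraph (Fin n) // K.2 ⊆ S ∧ FGraph.IsoTo H K}

/-- Union of two `F`-graphs. -/
def FGraph.union {V : Type*} [DecidableEq V] (H K : FGraph V) : FGraph V :=
  (H.1 ∪ K.1, H.2 ∪ K.2)

/-! ### d-graphs and the random d-graph `G*(n,p)` -/

/-- A d-graph: vertices, usual edges, and dummy edges (identified with sparse clean
`F`-cycles). -/
abbrev DGraph (V : Type*) := Finset V × Finset (Sym2 V) × Finset (FGraph V)

/-- All potential usual edges on `Fin n`. -/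
def allUsual (n : ℕ) : Finset (Sym2 (Fin n)) := Finset.univ.filter fun e => ¬e.IsDiag

/-- All potential dummy edges on `Fin n`: the sparse clean `F`-cycles. -/
def allDummies (r n : ℕ) (F : SimpleGraph (Fin r)) : Finset (FGraph (Fin n)) :=
  Finset.univ.filter fun C => IsSparse F C

/-- Expectation of `X` under the random d-graph `G*(n,p)`: each usual edge and each dummy
edge is included independently with probability `p`. -/
def dgExp (r n : ℕ) (F : SimpleGraph (Fin r)) (p : ℝ)
    (X : Finset (Sym2 (Fin n)) → Finset (FGraph (Fin n)) → ℝ) : ℝ :=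
  ∑ U ∈ (allUsual n).powerset, ∑ D ∈ (allDummies r n F).powerset,
    p ^ (U.card + D.card) *
      (1 - p) ^ (((allUsual n).card - U.card) + ((allDummies r n F).card - D.card)) * X U D

/-- Probability of `P` under the random d-graph `G*(n,p)`. -/
def dgProb (r n : ℕ) (F : SimpleGraph (Fin r)) (p : ℝ)
    (P : Finset (Sym2 (Fin n)) → Finset (FGraph (Fin n)) → Prop) : ℝ :=
  dgExp r n F p fun U D => if P U D then 1 else 0

/-- Image of a d-graph under a vertex map. -/
def DGraph.map {V W : Type*} [DecidableEq V] [DecidableEq W] (ψ : V → W)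
    (K : DGraph V) : DGraph W :=
  (K.1.image ψ, K.2.1.image (Sym2.map ψ), K.2.2.image (FGraph.map ψ))

/-- `K` is isomorphic to `L` as a d-graph. -/
def DGraph.IsoTo {V W : Type*} [DecidableEq V] [DecidableEq W] (K : DGraph V)
    (L : DGraph W) : Prop :=
  ∃ ψ : V → W, Set.InjOn ψ ↑K.1 ∧ DGraph.map ψ K = L

/-- The number of copies of the d-graph `K` inside the d-graph on `Fin n` with usual edges
`U` and dummy edges `D`. -/
def dCopyCount {V : Type*} [DecidableEq V] (K : DGraph V) {n : ℕ}
    (U : Finset (Sym2 (Fin n))) (D : Finset (FGraph (Fin n))) : ℕ :=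
  Nat.card {L : DGraph (Fin n) // L.2.1 ⊆ U ∧ L.2.2 ⊆ D ∧ DGraph.IsoTo K L}

/-- Union of two d-graphs. -/
def DGraph.union {V : Type*} [DecidableEq V] (K L : DGraph V) : DGraph V :=
  (K.1 ∪ L.1, K.2.1 ∪ L.2.1, K.2.2 ∪ L.2.2)

/-- `G` is the clean d-cycle corresponding to the clean `F`-cycle `C`: the shadow graph of
`C` if `C` is dense, together with the dummy edge `C` if `C` is sparse. -/
def IsCleanDCycleOf {r : ℕ} {V : Type*} [DecidableEq V] (F : SimpleGraph (Fin r))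
    (G : DGraph V) (C : FGraph V) : Prop :=
  (IsCleanCycle F C ∧ ¬IsSparse F C ∧ G = (C.1, shadowEdges C, (∅ : Finset (FGraph V)))) ∨
  (IsSparse F C ∧ G = (C.1, shadowEdges C, ({C} : Finset (FGraph V))))



/-! ### Auxiliary lemmas -/

lemma sym2_exists_eq {α : Type*} (e : Sym2 α) : ∃ a b, e = s(a, b) :=
  e.inductionOn fun a b => ⟨a, b, rfl⟩

lemma FEdge.card_fst {r : ℕ} {V : Type*} {F : SimpleGraph (Fin r)}
    {h : FEdge V} (hc : FEdge.IsCopyOf h F) : h.1.card = r := by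
  obtain ⟨φ, hinj, hv, -⟩ := hc
  have : (↑h.1 : Set V).ncard = r := by
    rw [hv, ← Set.image_univ, Set.ncard_image_of_injective _ hinj, Set.ncard_univ,
      Nat.card_eq_fintype_card, Fintype.card_fin]
  simpa [Set.ncard_coe_finset] using this

lemma FEdge.card_snd {r : ℕ} {V : Type*} {F : SimpleGraph (Fin r)}
    {h : FEdge V} (hc : FEdge.IsCopyOf h F) : h.2.card = edgeCnt F := by
  obtain ⟨φ, hinj, -, he⟩ := hc
  have : (↑h.2 : Set (Sym2 V)).ncard = F.edgeSet.ncard := by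
    rw [he, Set.ncard_image_of_injective _ (Sym2.map.injective hinj)]
  simpa [Set.ncard_coe_finset, edgeCnt] using this

lemma FEdge.mem_vert {r : ℕ} {V : Type*} {F : SimpleGraph (Fin r)}
    {h : FEdge V} (hc : FEdge.IsCopyOf h F) {e : Sym2 V} (he : e ∈ h.2)
    {z : V} (hz : z ∈ e) : z ∈ h.1 := by
  obtain ⟨φ, hinj, hv, hE⟩ := hc
  have he' : e ∈ Sym2.map φ '' F.edgeSet := by rw [← hE]; exact_mod_cast he
  obtain ⟨e', -, rfl⟩ := he'
  obtain ⟨a, ha, rfl⟩ := Sym2.mem_map.mp hz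
  have : φ a ∈ Set.range φ := ⟨a, rfl⟩
  rw [← hv] at this
  exact_mod_cast this

lemma FEdge.not_isDiag {r : ℕ} {V : Type*} {F : SimpleGraph (Fin r)}
    {h : FEdge V} (hc : FEdge.IsCopyOf h F) {e : Sym2 V} (he : e ∈ h.2) :
    ¬ e.IsDiag := by
  obtain ⟨φ, hinj, -, hE⟩ := hc
  have he' : e ∈ Sym2.map φ '' F.edgeSet := by rw [← hE]; exact_mod_cast he
  obtain ⟨e', he', rfl⟩ := he'
  rw [Sym2.isDiag_map hinj]
  exact F.not_isDiag_of_mem_edgeSet he'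

lemma aux_sub_bound {r : ℕ} (hr : 3 ≤ r) (F : SimpleGraph (Fin r)) (hF : Strictly1Balanced F)
    {V : Type*} [DecidableEq V] (h : FEdge V) (hc : FEdge.IsCopyOf h F)
    (W' : Finset V) (A : Finset (Sym2 V)) (hW' : W' ⊆ h.1) (hA : A ⊆ h.2)
    (hAW : ∀ e ∈ A, ∀ z ∈ e, z ∈ W') (hA1 : A.Nonempty) :
    ((A.card : ℤ) * ((r : ℤ) - 1) ≤ (edgeCnt F : ℤ) * ((W'.card : ℤ) - 1)) ∧
    (¬(W' = h.1 ∧ A = h.2) →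
      (A.card : ℤ) * ((r : ℤ) - 1) + 1 ≤ (edgeCnt F : ℤ) * ((W'.card : ℤ) - 1)) := by
  obtain ⟨φ, hinj, hv, hE⟩ := hc
  set S : F.Subgraph :=
    { verts := φ ⁻¹' ↑W'
      Adj := fun u v => F.Adj u v ∧ s(φ u, φ v) ∈ A
      adj_sub := fun hadj => hadj.1
      edge_vert := fun {u v} hadj => by
        obtain ⟨h1, h2⟩ := hadj
        simpa using hAW _ h2 (φ u) (by simp)
      symm := ⟨fun u v hadj => by
        obtain ⟨h1, h2⟩ := hadj
        exact ⟨h1.symm, by rwa [Sym2.eq_swap]⟩⟩ } with hS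
  have himg : Sym2.map φ '' S.edgeSet = ↑A := by
    apply Set.Subset.antisymm
    · rintro e ⟨e', he', rfl⟩
      obtain ⟨a, b, rfl⟩ := sym2_exists_eq e'
      have hadj : S.Adj a b := SimpleGraph.Subgraph.mem_edgeSet.mp he'
      exact_mod_cast hadj.2
    · intro e heA
      have hmem : e ∈ Sym2.map φ '' F.edgeSet := by
        rw [← hE]; exact_mod_cast hA heA
      obtain ⟨e', he', rfl⟩ := hmem
      obtain ⟨a, b, rfl⟩ := sym2_exists_eq e'
      refine ⟨s(a, b), ?_, rfl⟩
      exact SimpleGraph.Subgraph.mem_edgeSet.mpr ⟨he', by exact_mod_cast heA⟩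
  have hecard : S.edgeSet.ncard = A.card := by
    rw [← Set.ncard_coe_finset, ← himg,
      Set.ncard_image_of_injective _ (Sym2.map.injective hinj)]
  have hvimg : φ '' S.verts = ↑W' := by
    apply Set.image_preimage_eq_of_subset
    rw [← hv]; exact_mod_cast hW'
  have hvcard : S.verts.ncard = W'.card := by
    rw [← Set.ncard_coe_finset, ← hvimg, Set.ncard_image_of_injective _ hinj]
  have h2W : 2 ≤ W'.card := by
    obtain ⟨e, heA⟩ := hA1
    obtain ⟨a, b, rfl⟩ := sym2_exists_eq e
    have hab : a ≠ b := by
      have := FEdge.not_isDiag ⟨φ, hinj, hv, hE⟩ (hA heA)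
      simpa using this
    exact Finset.one_lt_card.mpr
      ⟨a, hAW _ heA a (by simp), b, hAW _ heA b (by simp), hab⟩
  rcases eq_or_ne S ⊤ with hTop | hTop
  · have hWeq : W' = h.1 := by
      apply Finset.coe_injective
      rw [hv]
      apply Set.Subset.antisymm
      · rw [← hv]; exact_mod_cast hW'
      · rintro z ⟨u, rfl⟩
        rw [← hvimg]
        exact ⟨u, by rw [hTop]; trivial, rfl⟩
    have hAeq : A = h.2 := by
      apply Finset.coe_injective
      rw [hE, ← himg, hTop, SimpleGraph.Subgraph.edgeSet_top]
    refine ⟨?_, fun hcon => absurd ⟨hWeq, hAeq⟩ hcon⟩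
    rw [hWeq, hAeq, FEdge.card_fst ⟨φ, hinj, hv, hE⟩, FEdge.card_snd ⟨φ, hinj, hv, hE⟩]
  · have hlt := hF S hTop (by rw [hvcard]; exact h2W)
      (by rw [hecard]; exact hA1.card_pos)
    rw [hvcard, hecard, d1] at hlt
    have hd1 : (0:ℝ) < (W'.card : ℝ) - 1 := by
      have : (2:ℝ) ≤ (W'.card : ℝ) := by exact_mod_cast h2W
      linarith
    have hd2 : (0:ℝ) < (r : ℝ) - 1 := by
      have : (3:ℝ) ≤ (r : ℝ) := by exact_mod_cast hr
      linarith
    rw [div_lt_div_iff₀ hd1 hd2] at hlt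
    have hZ : (A.card : ℤ) * ((r : ℤ) - 1) < (edgeCnt F : ℤ) * ((W'.card : ℤ) - 1) := by
      exact_mod_cast hlt
    exact ⟨le_of_lt hZ, fun _ => hZ⟩

/-- The clean d-cycle `G` of a sparse clean `F`-cycle `C` (its shadow
graph, with `2(r-1)` vertices and `2e(F)-1` usual edges, together with the dummy edge `C`,
so `e(G) = 2e(F)` and `e(G)/v(G) = d₁(F)`) is strictly balanced: every proper sub-d-graph
with at least one edge has strictly smaller density. -/
theorem sparse_clean_dcycle_strictly_balanced {r : ℕ} (hr : 3 ≤ r)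
    (F : SimpleGraph (Fin r)) (hF : Strictly1Balanced F) {V : Type*} [DecidableEq V]
    (C : FGraph V) (hC : IsSparse F C) :
    C.1.card = 2 * (r - 1) ∧
    (shadowEdges C).card = 2 * edgeCnt F - 1 ∧
    (((shadowEdges C).card : ℝ) + 1) / (C.1.card : ℝ) = d1 F ∧
    (∀ (W : Finset V) (U' : Finset (Sym2 V)) (D' : Finset (FGraph V)),
      W ⊆ C.1 → U' ⊆ shadowEdges C → D' ⊆ {C} →
      (∀ e ∈ U', ∀ x ∈ e, x ∈ W) → (∀ Cd ∈ D', Cd.1 ⊆ W) →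
      ¬(W = C.1 ∧ U' = shadowEdges C ∧ D' = {C}) → 1 ≤ U'.card + D'.card →
      ((U'.card : ℝ) + (D'.card : ℝ)) / (W.card : ℝ)
        < (((shadowEdges C).card : ℝ) + 1) / (C.1.card : ℝ)) := by
  obtain ⟨⟨hwf, hsupv, -⟩, h₁, h₂, hne, hC2, x, y, hxy, hVint, hxy1, hxy2⟩ := hC
  have hm1 : h₁ ∈ C.2 := by rw [hC2]; simp
  have hm2 : h₂ ∈ C.2 := by rw [hC2]; simp
  have hc₁ : FEdge.IsCopyOf h₁ F := (hwf h₁ hm1).1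
  have hc₂ : FEdge.IsCopyOf h₂ F := (hwf h₂ hm2).1
  have hV : C.1 = h₁.1 ∪ h₂.1 := by rw [hsupv, hC2]; simp
  have hSh : shadowEdges C = h₁.2 ∪ h₂.2 := by rw [shadowEdges, hC2]; simp
  have c11 : h₁.1.card = r := FEdge.card_fst hc₁
  have c21 : h₂.1.card = r := FEdge.card_fst hc₂
  have c12 : h₁.2.card = edgeCnt F := FEdge.card_snd hc₁
  have c22 : h₂.2.card = edgeCnt F := FEdge.card_snd hc₂
  have he1 : 1 ≤ edgeCnt F := by
    rw [← c12]; exact Finset.card_pos.mpr ⟨_, hxy1⟩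
  have hEint : h₁.2 ∩ h₂.2 = {s(x, y)} := by
    apply Finset.Subset.antisymm
    · intro e he
      rw [Finset.mem_inter] at he
      obtain ⟨a, b, rfl⟩ := sym2_exists_eq e
      have hab : a ≠ b := by
        have := FEdge.not_isDiag hc₁ he.1
        simpa using this
      have ha : a ∈ ({x, y} : Finset V) := by
        rw [← hVint, Finset.mem_inter]
        exact ⟨FEdge.mem_vert hc₁ he.1 (by simp), FEdge.mem_vert hc₂ he.2 (by simp)⟩
      have hb : b ∈ ({x, y} : Finset V) := by
        rw [← hVint, Finset.mem_inter]
        exact ⟨FEdge.mem_vert hc₁ he.1 (by simp), FEdge.mem_vert hc₂ he.2 (by simp)⟩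
      simp only [Finset.mem_insert, Finset.mem_singleton] at ha hb
      rw [Finset.mem_singleton]
      rcases ha with rfl | rfl <;> rcases hb with rfl | rfl
      · exact absurd rfl hab
      · rfl
      · rw [Sym2.eq_swap]
      · exact absurd rfl hab
    · intro e he
      rw [Finset.mem_singleton] at he
      subst he
      exact Finset.mem_inter.mpr ⟨hxy1, hxy2⟩
  have hcxy : ({x, y} : Finset V).card = 2 := Finset.card_pair hxy
  have hVcard : C.1.card = 2 * (r - 1) := by
    have hiu := Finset.card_union_add_card_inter h₁.1 h₂.1
    rw [hVint, hcxy, ← hV, c11, c21] at hiu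
    omega
  have hEcard : (shadowEdges C).card = 2 * edgeCnt F - 1 := by
    have hiu := Finset.card_union_add_card_inter h₁.2 h₂.2
    rw [hEint, Finset.card_singleton, ← hSh, c12, c22] at hiu
    omega
  have hrR : ((2 * (r - 1) : ℕ) : ℝ) = 2 * ((r : ℝ) - 1) := by
    rw [Nat.cast_mul, Nat.cast_sub (by omega : 1 ≤ r)]
    norm_num
  have heR : ((2 * edgeCnt F - 1 : ℕ) : ℝ) = 2 * (edgeCnt F : ℝ) - 1 := by
    rw [Nat.cast_sub (by omega : 1 ≤ 2 * edgeCnt F)]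
    push_cast
    ring
  have hrpos : (0 : ℝ) < (r : ℝ) - 1 := by
    have : (3 : ℝ) ≤ (r : ℝ) := by exact_mod_cast hr
    linarith
  have hdens : (((shadowEdges C).card : ℝ) + 1) / (C.1.card : ℝ) = d1 F := by
    rw [hVcard, hEcard, hrR, heR, d1]
    rw [show (2 : ℝ) * (edgeCnt F : ℝ) - 1 + 1 = 2 * (edgeCnt F : ℝ) by ring,
      mul_div_mul_left _ _ (two_ne_zero)]
  refine ⟨hVcard, hEcard, hdens, ?_⟩
  intro W U' D' hWsub hUsub hDsub hUW hDW hproper hcard1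
  rw [hdens, d1]
  rcases Finset.subset_singleton_iff.mp hDsub with rfl | rfl
  · -- no dummy edge
    simp only [Finset.card_empty, Nat.cast_zero, add_zero]
    have hU1 : U'.Nonempty := by
      rw [← Finset.card_pos]
      simpa using hcard1
    have hWpos : (0 : ℝ) < (W.card : ℝ) := by
      obtain ⟨e0, he0⟩ := hU1
      obtain ⟨a, b, rfl⟩ := sym2_exists_eq e0
      have : a ∈ W := hUW _ he0 a (by simp)
      exact_mod_cast Finset.card_pos.mpr ⟨a, this⟩
    rw [div_lt_div_iff₀ hWpos hrpos]
    suffices key : (U'.card : ℤ) * ((r : ℤ) - 1) < (edgeCnt F : ℤ) * (W.card : ℤ) by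
      exact_mod_cast key
    -- split the edges and vertices among the two copies
    have hUu : U' = (U' ∩ h₁.2) ∪ (U' ∩ h₂.2) := by
      rw [← Finset.inter_union_distrib_left]
      exact (Finset.inter_eq_left.mpr (by rw [← hSh]; exact hUsub)).symm
    have hWu : W = (W ∩ h₁.1) ∪ (W ∩ h₂.1) := by
      rw [← Finset.inter_union_distrib_left]
      exact (Finset.inter_eq_left.mpr (by rw [← hV]; exact hWsub)).symm
    have hintE : (U' ∩ h₁.2) ∩ (U' ∩ h₂.2) = U' ∩ {s(x, y)} := by
      rw [Finset.inter_inter_inter_comm, Finset.inter_self, hEint]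
    have hintV : (W ∩ h₁.1) ∩ (W ∩ h₂.1) = W ∩ {x, y} := by
      rw [Finset.inter_inter_inter_comm, Finset.inter_self, hVint]
    have cardU : U'.card + (U' ∩ {s(x, y)}).card
        = (U' ∩ h₁.2).card + (U' ∩ h₂.2).card := by
      have hcu := Finset.card_union_add_card_inter (U' ∩ h₁.2) (U' ∩ h₂.2)
      rw [hintE, ← hUu] at hcu
      exact hcu
    have cardW : W.card + (W ∩ {x, y}).card
        = (W ∩ h₁.1).card + (W ∩ h₂.1).card := by
      have hcw := Finset.card_union_add_card_inter (W ∩ h₁.1) (W ∩ h₂.1)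
      rw [hintV, ← hWu] at hcw
      exact hcw
    have bV : (W ∩ {x, y}).card ≤ 2 := by
      calc (W ∩ {x, y}).card ≤ ({x, y} : Finset V).card :=
            Finset.card_le_card Finset.inter_subset_right
        _ = 2 := hcxy
    have hw1le : (W ∩ h₁.1).card ≤ W.card := Finset.card_le_card Finset.inter_subset_left
    have hw2le : (W ∩ h₂.1).card ≤ W.card := Finset.card_le_card Finset.inter_subset_left
    have hwsum : (W ∩ h₁.1).card + (W ∩ h₂.1).card ≤ W.card + 2 := by omega
    have hB : ∀ h : FEdge V, FEdge.IsCopyOf h F → (U' ∩ h.2).Nonempty →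
        (((U' ∩ h.2).card : ℤ) * ((r : ℤ) - 1)
          ≤ (edgeCnt F : ℤ) * (((W ∩ h.1).card : ℤ) - 1)) ∧
        (¬(W ∩ h.1 = h.1 ∧ U' ∩ h.2 = h.2) →
          ((U' ∩ h.2).card : ℤ) * ((r : ℤ) - 1) + 1
            ≤ (edgeCnt F : ℤ) * (((W ∩ h.1).card : ℤ) - 1)) := by
      intro h hc hA1
      apply aux_sub_bound hr F hF h hc _ _ Finset.inter_subset_right
        Finset.inter_subset_right _ hA1
      intro e he z hz
      rw [Finset.mem_inter] at he ⊢
      exact ⟨hUW _ he.1 z hz, FEdge.mem_vert hc he.2 hz⟩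
    have heZ : (1 : ℤ) ≤ (edgeCnt F : ℤ) := by exact_mod_cast he1
    have hrZ : (3 : ℤ) ≤ (r : ℤ) := by exact_mod_cast hr
    have hwsZ : ((W ∩ h₁.1).card : ℤ) + ((W ∩ h₂.1).card : ℤ) ≤ (W.card : ℤ) + 2 := by
      exact_mod_cast hwsum
    have hmulW : (edgeCnt F : ℤ) * (((W ∩ h₁.1).card : ℤ) + ((W ∩ h₂.1).card : ℤ) - 2)
        ≤ (edgeCnt F : ℤ) * (W.card : ℤ) := by
      apply mul_le_mul_of_nonneg_left _ (by linarith)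
      linarith
    rcases Finset.eq_empty_or_nonempty (U' ∩ h₁.2) with hA1e | hA1ne <;>
      rcases Finset.eq_empty_or_nonempty (U' ∩ h₂.2) with hA2e | hA2ne
    · -- both empty: impossible
      exfalso
      rw [hUu, hA1e, hA2e] at hU1
      simp at hU1
    · -- only in h₂
      have hnot : s(x, y) ∉ U' := by
        intro hmem
        have : s(x, y) ∈ U' ∩ h₁.2 := Finset.mem_inter.mpr ⟨hmem, hxy1⟩
        rw [hA1e] at this
        simp at this
      have hUcard : U'.card = (U' ∩ h₂.2).card := by
        rw [Finset.inter_singleton_of_notMem hnot] at cardU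
        rw [hA1e] at cardU
        simpa using cardU
      have hstrict := (hB h₂ hc₂ hA2ne).2 (by
        rintro ⟨-, hAeq⟩
        exact hnot (Finset.mem_inter.mp (show s(x, y) ∈ U' ∩ h₂.2 by rw [hAeq]; exact hxy2)).1)
      have hw2Z : ((W ∩ h₂.1).card : ℤ) ≤ (W.card : ℤ) := by exact_mod_cast hw2le
      have hmul2 : (edgeCnt F : ℤ) * ((W ∩ h₂.1).card : ℤ)
          ≤ (edgeCnt F : ℤ) * (W.card : ℤ) :=
        mul_le_mul_of_nonneg_left hw2Z (by linarith)
      rw [show (U'.card : ℤ) = ((U' ∩ h₂.2).card : ℤ) by exact_mod_cast hUcard]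
      linarith
    · -- only in h₁
      have hnot : s(x, y) ∉ U' := by
        intro hmem
        have : s(x, y) ∈ U' ∩ h₂.2 := Finset.mem_inter.mpr ⟨hmem, hxy2⟩
        rw [hA2e] at this
        simp at this
      have hUcard : U'.card = (U' ∩ h₁.2).card := by
        rw [Finset.inter_singleton_of_notMem hnot] at cardU
        rw [hA2e] at cardU
        simpa using cardU
      have hstrict := (hB h₁ hc₁ hA1ne).2 (by
        rintro ⟨-, hAeq⟩
        exact hnot (Finset.mem_inter.mp (show s(x, y) ∈ U' ∩ h₁.2 by rw [hAeq]; exact hxy1)).1)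
      have hw1Z : ((W ∩ h₁.1).card : ℤ) ≤ (W.card : ℤ) := by exact_mod_cast hw1le
      have hmul1 : (edgeCnt F : ℤ) * ((W ∩ h₁.1).card : ℤ)
          ≤ (edgeCnt F : ℤ) * (W.card : ℤ) :=
        mul_le_mul_of_nonneg_left hw1Z (by linarith)
      rw [show (U'.card : ℤ) = ((U' ∩ h₁.2).card : ℤ) by exact_mod_cast hUcard]
      linarith
    · -- both nonempty
      have hB1 := hB h₁ hc₁ hA1ne
      have hB2 := hB h₂ hc₂ hA2ne
      by_cases hsxy : s(x, y) ∈ U'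
      · have hcap : (U' ∩ {s(x, y)}).card = 1 := by
          rw [Finset.inter_singleton_of_mem hsxy]
          simp
        have hUc : (U'.card : ℤ) + 1
            = ((U' ∩ h₁.2).card : ℤ) + ((U' ∩ h₂.2).card : ℤ) := by
          rw [hcap] at cardU
          exact_mod_cast cardU
        have hrw : (U'.card : ℤ)
            = ((U' ∩ h₁.2).card : ℤ) + ((U' ∩ h₂.2).card : ℤ) - 1 := by linarith
        rw [hrw]
        linarith [hB1.1, hB2.1, hmulW, hrZ]
      · have hcap : (U' ∩ {s(x, y)}).card = 0 := by
          rw [Finset.inter_singleton_of_notMem hsxy]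
          simp
        have hUc : (U'.card : ℤ)
            = ((U' ∩ h₁.2).card : ℤ) + ((U' ∩ h₂.2).card : ℤ) := by
          rw [hcap] at cardU
          exact_mod_cast cardU
        have hstrict1 := hB1.2 (by
          rintro ⟨-, hAeq⟩
          exact hsxy (Finset.mem_inter.mp (show s(x, y) ∈ U' ∩ h₁.2 by rw [hAeq]; exact hxy1)).1)
        have hstrict2 := hB2.2 (by
          rintro ⟨-, hAeq⟩
          exact hsxy (Finset.mem_inter.mp (show s(x, y) ∈ U' ∩ h₂.2 by rw [hAeq]; exact hxy2)).1)
        rw [hUc]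
        linarith [hstrict1, hstrict2, hmulW]
  · -- D' = {C}
    have hWC : W = C.1 := Finset.Subset.antisymm hWsub (hDW C (Finset.mem_singleton_self C))
    have hUne : U' ≠ shadowEdges C := fun hU => hproper ⟨hWC, hU, rfl⟩
    have hUlt : U'.card < (shadowEdges C).card :=
      Finset.card_lt_card (lt_of_le_of_ne hUsub hUne)
    have hUlt2 : U'.card + 1 < 2 * edgeCnt F := by
      rw [hEcard] at hUlt
      omega
    have hUltR : (U'.card : ℝ) + 1 < 2 * (edgeCnt F : ℝ) := by exact_mod_cast hUlt2
    rw [hWC, hVcard, hrR]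
    simp only [Finset.card_singleton, Nat.cast_one]
    rw [div_lt_div_iff₀ (by linarith) hrpos]
    calc ((U'.card : ℝ) + 1) * ((r : ℝ) - 1)
        < 2 * (edgeCnt F : ℝ) * ((r : ℝ) - 1) := mul_lt_mul_of_pos_right hUltR hrpos
      _ = (edgeCnt F : ℝ) * (2 * ((r : ℝ) - 1)) := by ring

end
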